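/- Feng–Xiang setting; let t be an odd prime with gcd(t, p1) = 1, let t^{-1} be the inverse of t modulo N, let γ be a primitive element of F_{q^t} and ω = γ^{(q^t−1)/(q−1)}. Let D1 = ⋃_{i∈I1} ω^i⟨ω^N⟩ and D2 = ⋃_{i∈I2} ω^i⟨ω^N⟩ be two Feng–Xiang skew Hadamard difference sets in F_q with index sets I1, I2, and let D1' = ⋃_{i∈I1} γ^i⟨γ^N⟩ and D2' = ⋃_{i∈I2} γ^i⟨γ^N⟩ be their lifts to F_{q^t}. Fix a ∈ F_p^* \ {1}. If {T_{ω^ℓ,a}(D1^{(t^{-1})}) mod t : 0 ≤ ℓ ≤ N−1} ≠ {T_{ω^ℓ,a}(D2^{(t^{-1})}) mod t : 0 ≤ ℓ ≤ N−1} as subsets of Z/tZ, then {T_{γ^ℓ,a}(D1') mod t : 0 ≤ ℓ ≤ N−1} ≠ {T_{γ^ℓ,a}(D2') mod t : 0 ≤ ℓ ≤ N−1}; in particular D1' and D2' are inequivalent (no automorphism σ of (F_{q^t},+) and x ∈ F_{q^t} satisfy σ(D1') + x = D2'). -/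

import Mathlib

/-- The triple intersection number `T_{β,a}(D) = |D ∩ (D - β) ∩ (D - aβ)|`. -/
noncomputable def tripleInt {F : Type*} [Field F] (β a : F) (D : Set F) : ℕ :=
  Set.ncard {x : F | x ∈ D ∧ x + β ∈ D ∧ x + a * β ∈ D}

namespace FXProof

open Finset Function Set

lemma pow_eq_pow_iff' {K : Type*} [Field K] {g : K} (hg : g ≠ 0) {n m : ℕ} :
    g ^ n = g ^ m ↔ n ≡ m [MOD orderOf g] := by
  have h1 : orderOf (Units.mk0 g hg) = orderOf g := by
    rw [← orderOf_units]; rfl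
  rw [← h1, ← pow_eq_pow_iff_modEq]
  constructor
  · intro h
    ext
    simpa using h
  · intro h
    have := congrArg Units.val h
    simpa using this

lemma exists_pow_eq {K : Type*} [Field K] [Fintype K] {γ : K}
    (hγ : orderOf γ = Fintype.card K - 1) {x : K} (hx : x ≠ 0) : ∃ k : ℕ, x = γ ^ k := by
  classical
  have hcard : 1 < Fintype.card K := Fintype.one_lt_card
  have hγ0 : γ ≠ 0 := by
    intro h
    have h1 := pow_orderOf_eq_one γ
    rw [hγ, h, zero_pow (by omega : Fintype.card K - 1 ≠ 0)] at h1
    exact zero_ne_one h1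
  set u : Kˣ := Units.mk0 γ hγ0 with hu_def
  have hu : orderOf u = Fintype.card Kˣ := by
    rw [Fintype.card_units, ← hγ, ← orderOf_units]
    rfl
  have htop : Subgroup.zpowers u = ⊤ := by
    apply Subgroup.eq_top_of_card_eq
    rw [Nat.card_zpowers, hu, Nat.card_eq_fintype_card]
  have hmem : Units.mk0 x hx ∈ Subgroup.zpowers u := htop ▸ Subgroup.mem_top _
  rw [← (isOfFinOrder_of_finite u).mem_powers_iff_mem_zpowers] at hmem
  obtain ⟨k, hk⟩ := hmem
  refine ⟨k, ?_⟩
  have := congrArg Units.val hk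
  simpa [hu_def] using this.symm

lemma ncard_modEq_fixed {α : Type*} [Finite α] (t : ℕ) (ht : t.Prime)
    (S : Set α) (τ : α → α) (hmaps : Set.MapsTo τ S S) (hinj : Function.Injective τ)
    (hper : ∀ x, τ^[t] x = x) :
    S.ncard ≡ {x | x ∈ S ∧ τ x = x}.ncard [MOD t] := by
  classical
  haveI : Fact t.Prime := ⟨ht⟩
  let τ' : S → S := fun x => ⟨τ x, hmaps x.2⟩
  have hinj' : Function.Injective τ' := by
    intro x y h
    exact Subtype.ext (hinj (congrArg Subtype.val h))
  let g : Equiv.Perm S := Equiv.ofBijective τ' (Finite.injective_iff_bijective.mp hinj')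
  have hgval : ∀ x : S, (g x : α) = τ x := fun x => rfl
  have hcomm : ∀ (n : ℕ) (x : S), (((⇑g)^[n] x : S) : α) = τ^[n] (x : α) := by
    intro n
    induction n with
    | zero => intro x; rfl
    | succ n ih =>
      intro x
      rw [Function.iterate_succ_apply', Function.iterate_succ_apply', hgval, ih x]
  have hgt : g ^ t = 1 := by
    ext x
    have h1 : ((g ^ t) x : α) = τ^[t] (x : α) := by
      rw [Equiv.Perm.coe_pow]; exact hcomm t x
    rw [h1, hper]
    rfl
  set G := Subgroup.zpowers g with hG_def
  have hpg : IsPGroup t G := by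
    have hdvd : orderOf g ∣ t := orderOf_dvd_of_pow_eq_one hgt
    rcases (Nat.Prime.eq_one_or_self_of_dvd ht _ hdvd) with h | h
    · exact IsPGroup.of_card (n := 0) (by rw [Nat.card_zpowers, h, pow_zero])
    · exact IsPGroup.of_card (n := 1) (by rw [Nat.card_zpowers, h, pow_one])
  have hfix := hpg.card_modEq_card_fixedPoints S
  have hgen : ∀ x : S, x ∈ MulAction.fixedPoints G S ↔ τ (x : α) = (x : α) := by
    intro x
    rw [MulAction.mem_fixedPoints]
    constructor
    · intro h
      have h2 : g x = x := h ⟨g, Subgroup.mem_zpowers g⟩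
      have h3 := congrArg Subtype.val h2
      rw [hgval] at h3
      exact h3
    · intro h m
      obtain ⟨k, hk⟩ := m.2
      have hfx : Function.IsFixedPt g x := Subtype.ext (by rw [hgval]; exact h)
      have := hfx.perm_zpow k
      show (m : Equiv.Perm S) x = x
      rw [← hk]
      exact this
  have e : MulAction.fixedPoints G S ≃ {x : α | x ∈ S ∧ τ x = x} := by
    refine ⟨fun y => ⟨y.1.1, y.1.2, (hgen y.1).mp y.2⟩,
      fun z => ⟨⟨z.1, z.2.1⟩, (hgen ⟨z.1, z.2.1⟩).mpr z.2.2⟩, ?_, ?_⟩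
    · intro y; rfl
    · intro z; rfl
  have h1 : Nat.card S = S.ncard := Nat.card_coe_set_eq S
  have h2 : Nat.card (MulAction.fixedPoints G S) = {x | x ∈ S ∧ τ x = x}.ncard := by
    rw [Nat.card_congr e]
    exact Nat.card_coe_set_eq _
  rw [h1, h2] at hfix
  exact hfix

lemma tripleInt_smul {K : Type*} [Field K] (c : K) (hc : c ≠ 0) (a : K) (D : Set K)
    (hD : ∀ x, x ∈ D ↔ c * x ∈ D) (β : K) :
    tripleInt (c * β) a D = tripleInt β a D := by
  unfold tripleInt
  have himg : {x : K | x ∈ D ∧ x + c * β ∈ D ∧ x + a * (c * β) ∈ D}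
      = (fun x => c * x) '' {x : K | x ∈ D ∧ x + β ∈ D ∧ x + a * β ∈ D} := by
    ext z
    constructor
    · rintro ⟨h1, h2, h3⟩
      refine ⟨c⁻¹ * z, ⟨?_, ?_, ?_⟩, by field_simp⟩
      · rw [hD, mul_inv_cancel_left₀ hc]; exact h1
      · rw [hD, mul_add, mul_inv_cancel_left₀ hc]; exact h2
      · rw [hD, mul_add, mul_inv_cancel_left₀ hc,
          show c * (a * β) = a * (c * β) by ring]; exact h3
    · rintro ⟨x, ⟨h1, h2, h3⟩, rfl⟩
      refine ⟨(hD x).mp h1, ?_, ?_⟩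
      · have := (hD (x + β)).mp h2
        rwa [mul_add] at this
      · have := (hD (x + a * β)).mp h3
        rwa [mul_add, show c * (a * β) = a * (c * β) by ring] at this
  rw [himg, Set.ncard_image_of_injective _ (mul_right_injective₀ hc)]

lemma tripleInt_pow_add {K : Type*} [Field K] (g : K) (hg : g ≠ 0) (N : ℕ) (a : K) (D : Set K)
    (hD : ∀ x, x ∈ D ↔ g ^ N * x ∈ D) (n r : ℕ) :
    tripleInt (g ^ (N * n + r)) a D = tripleInt (g ^ r) a D := by
  induction n with
  | zero => simp
  | succ n ih =>
    have h1 : N * (n + 1) + r = N + (N * n + r) := by ring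
    rw [h1, pow_add, tripleInt_smul (g ^ N) (pow_ne_zero _ hg) a D hD, ih]

lemma tripleInt_pow_congr {K : Type*} [Field K] (g : K) (hg : g ≠ 0) (N : ℕ) (a : K) (D : Set K)
    (hD : ∀ x, x ∈ D ↔ g ^ N * x ∈ D) (k k' : ℕ) (h : (k : ZMod N) = (k' : ZMod N)) :
    tripleInt (g ^ k) a D = tripleInt (g ^ k') a D := by
  have hmod : k % N = k' % N := (ZMod.natCast_eq_natCast_iff' _ _ _).mp h
  have h1 := tripleInt_pow_add g hg N a D hD (k / N) (k % N)
  have h2 := tripleInt_pow_add g hg N a D hD (k' / N) (k' % N)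
  rw [Nat.div_add_mod] at h1 h2
  rw [h1, h2, hmod]

/-- The canonical "union of cosets" set. -/
def Cs {K : Type*} [Field K] (N : ℕ) (g : K) (J : Finset (ZMod N)) : Set K :=
  {x : K | ∃ k : ℕ, x = g ^ k ∧ (k : ZMod N) ∈ J}

lemma zero_not_mem_Cs {K : Type*} [Field K] {N : ℕ} {g : K} (hg : g ≠ 0)
    (J : Finset (ZMod N)) : (0 : K) ∉ Cs N g J := by
  rintro ⟨k, hk, -⟩
  exact (pow_ne_zero k hg) hk.symm

lemma mem_Cs_iff {K : Type*} [Field K] {N : ℕ} {g : K} (hg : g ≠ 0)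
    (hcong : ∀ k k' : ℕ, g ^ k = g ^ k' → (k : ZMod N) = (k' : ZMod N))
    (J : Finset (ZMod N)) (k : ℕ) :
    g ^ k ∈ Cs N g J ↔ (k : ZMod N) ∈ J := by
  constructor
  · rintro ⟨k', hk', hmem⟩
    rwa [hcong k k' hk']
  · intro h
    exact ⟨k, rfl, h⟩

lemma scale_Cs {K : Type*} [Field K] {N : ℕ} {g : K} (hg : g ≠ 0) {M : ℕ} (hM : 0 < M)
    (hgM : g ^ M = 1) (J : Finset (ZMod N)) (e : ℕ) (he : (e : ZMod N) = 0) (x : K) :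
    x ∈ Cs N g J ↔ g ^ e * x ∈ Cs N g J := by
  constructor
  · rintro ⟨k, rfl, hk⟩
    refine ⟨e + k, by rw [pow_add], ?_⟩
    push_cast
    rw [he, zero_add]
    exact hk
  · rintro ⟨j, hj, hjJ⟩
    have hle : e ≤ e * M := Nat.le_mul_of_pos_right e hM
    have hexp : e + (j + e * (M - 1)) = j + e * M := by
      have h1 : e * (M - 1) = e * M - e := by rw [Nat.mul_sub, mul_one]
      omega
    have hcalc : g ^ e * g ^ (j + e * (M - 1)) = g ^ j := by
      rw [← pow_add, hexp, pow_add, mul_comm e M, pow_mul, hgM, one_pow, mul_one]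
    refine ⟨j + e * (M - 1), ?_, ?_⟩
    · apply mul_left_cancel₀ (pow_ne_zero e hg)
      rw [hcalc, ← hj]
    · push_cast
      rw [he, zero_mul, add_zero]
      exact hjJ

lemma Cs_eq {K : Type*} [Field K] {N : ℕ} (hN0 : 0 < N) {g : K} (hg : g ≠ 0) {M : ℕ}
    (hM : 0 < M) (hgM : g ^ M = 1) (hNM : N ∣ M) (c : ℕ) (I : Finset ℕ) :
    {x : K | ∃ i ∈ I, ∃ j : ℕ, x = g ^ (c * i + N * j)}
      = Cs N g (I.image (fun i => ((c * i : ℕ) : ZMod N))) := by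
  haveI : NeZero N := ⟨hN0.ne'⟩
  ext x
  constructor
  · rintro ⟨i, hi, j, rfl⟩
    refine ⟨c * i + N * j, rfl, ?_⟩
    have hcast : ((c * i + N * j : ℕ) : ZMod N) = ((c * i : ℕ) : ZMod N) := by
      push_cast
      rw [ZMod.natCast_self, zero_mul, add_zero]
    rw [hcast]
    exact Finset.mem_image_of_mem _ hi
  · rintro ⟨k, rfl, hk⟩
    obtain ⟨i, hiI, hi⟩ := Finset.mem_image.mp hk
    set k' := k + M * (c * i) with hk'_def
    have hgk : g ^ k = g ^ k' := by
      rw [hk'_def, pow_add, pow_mul, hgM, one_pow, mul_one]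
    have hM0 : (M : ZMod N) = 0 := (ZMod.natCast_eq_zero_iff M N).mpr hNM
    have hcast : ((c * i : ℕ) : ZMod N) = (k' : ZMod N) := by
      rw [hk'_def]
      push_cast
      rw [hM0, zero_mul, add_zero]
      push_cast at hi
      rw [hi]
    have hle : c * i ≤ k' := by
      have h1 : c * i ≤ M * (c * i) := Nat.le_mul_of_pos_left (c * i) hM
      omega
    have hdvd : N ∣ k' - c * i :=
      (Nat.modEq_iff_dvd' hle).mp ((ZMod.natCast_eq_natCast_iff _ _ _).mp hcast)
    obtain ⟨j, hj⟩ := hdvd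
    refine ⟨i, hiI, j, ?_⟩
    rw [hgk]
    congr 1
    omega

end FXProof
theorem lifts_inequivalent_of_distinct_tripleInt_mod
    (p1 m N p f s q t tinv : ℕ)
    (hp1 : p1.Prime) (hp1mod : p1 % 8 = 7) (hm : 1 ≤ m) (hN : N = 2 * p1 ^ m)
    (hp : p.Prime) (hpmod : p % 4 = 3)
    (hf : f = N.totient / 2) (hord : orderOf (p : ZMod N) = f)
    (hs : Odd s) (hq : q = p ^ (f * s))
    (ht : t.Prime) (htodd : Odd t) (htp1 : Nat.Coprime t p1)
    (htinv : t * tinv ≡ 1 [MOD N])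
    (I1 I2 : Finset ℕ) (hI1N : ∀ i ∈ I1, i < N) (hI2N : ∀ i ∈ I2, i < N)
    (hI1cov : ∀ r : ZMod (p1 ^ m), ∃ i ∈ I1, (i : ZMod (p1 ^ m)) = r)
    (hI2cov : ∀ r : ZMod (p1 ^ m), ∃ i ∈ I2, (i : ZMod (p1 ^ m)) = r)
    (K : Type*) [Field K] [Fintype K] (hK : Fintype.card K = q ^ t)
    (γ : K) (hγ : orderOf γ = q ^ t - 1)
    (ω : K) (hω : ω = γ ^ ((q ^ t - 1) / (q - 1)))
    (D1t : Set K) (hD1t : D1t = {x : K | ∃ i ∈ I1, ∃ j : ℕ, x = ω ^ (tinv * i + N * j)})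
    (D2t : Set K) (hD2t : D2t = {x : K | ∃ i ∈ I2, ∃ j : ℕ, x = ω ^ (tinv * i + N * j)})
    (D1' : Set K) (hD1' : D1' = {x : K | ∃ i ∈ I1, ∃ j : ℕ, x = γ ^ (i + N * j)})
    (D2' : Set K) (hD2' : D2' = {x : K | ∃ i ∈ I2, ∃ j : ℕ, x = γ ^ (i + N * j)})
    (a : K) (ha0 : a ≠ 0) (ha1 : a ≠ 1) (hap : a ^ p = a)
    (hne : (Finset.range N).image (fun ℓ => ((tripleInt (ω ^ ℓ) a D1t : ℕ) : ZMod t)) ≠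
        (Finset.range N).image (fun ℓ => ((tripleInt (ω ^ ℓ) a D2t : ℕ) : ZMod t))) :
    ((Finset.range N).image (fun ℓ => ((tripleInt (γ ^ ℓ) a D1' : ℕ) : ZMod t)) ≠
        (Finset.range N).image (fun ℓ => ((tripleInt (γ ^ ℓ) a D2' : ℕ) : ZMod t))) ∧
      ¬ ∃ (σ : K ≃+ K) (x : K), (fun y => σ y + x) '' D1' = D2' := by
  classical
  haveI : Fact p.Prime := ⟨hp⟩
  haveI : Fact t.Prime := ⟨ht⟩
  -- basic positivity facts
  have hcard2 : 1 < Fintype.card K := Fintype.one_lt_card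
  have hqt2 : 2 ≤ q ^ t := by rw [← hK]; exact hcard2
  have hq2 : 2 ≤ q := by
    by_contra h
    push_neg at h
    have h1 : q ^ t ≤ 1 ^ t := Nat.pow_le_pow_left (by omega) t
    rw [one_pow] at h1
    omega
  have hN0 : 0 < N := by
    have h1 : 0 < p1 ^ m := pow_pos hp1.pos m
    omega
  haveI : NeZero N := ⟨hN0.ne'⟩
  have ht0 : 0 < t := ht.pos
  -- characteristic of K is p
  have hfst : 0 < f * s * t := by
    rcases Nat.eq_zero_or_pos (f * s * t) with h | h
    · exfalso
      have h1 : q ^ t = p ^ (f * s * t) := by rw [hq, ← pow_mul]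
      rw [h, pow_zero] at h1
      omega
    · exact h
  haveI hcharK : CharP K p := by
    obtain ⟨r, hr⟩ := CharP.exists K
    haveI := hr
    have hrprime : r.Prime := CharP.char_is_prime K r
    obtain ⟨n, -, hcard⟩ := FiniteField.card K r
    have h1 : p ^ (f * s * t) = r ^ (n : ℕ) := by
      rw [← hcard, hK, hq, ← pow_mul]
    have h2 : p ∣ r ^ (n : ℕ) := by
      rw [← h1]
      exact dvd_pow_self p hfst.ne'
    have h3 : p ∣ r := hp.dvd_of_dvd_pow h2
    have h4 : p = r := (Nat.prime_dvd_prime_iff_eq hp hrprime).mp h3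
    rw [h4]
    exact hr
  -- Fermat-type facts
  have hapow : ∀ n : ℕ, a ^ p ^ n = a := by
    intro n
    induction n with
    | zero => simp
    | succ n ih => rw [pow_succ, pow_mul, ih, hap]
  have haq : a ^ q = a := by rw [hq]; exact hapow (f * s)
  have hfrob : ∀ x y : K, (x + y) ^ q = x ^ q + y ^ q := by
    intro x y
    rw [hq]
    exact add_pow_char_pow (R := K) (p := p) (n := f * s) x y
  have hq0 : q ≠ 0 := by omega
  have hfrobinj : ∀ x y : K, x ^ q = y ^ q → x = y := by
    intro x y h
    have h2 : (x - y) ^ q = 0 := by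
      rw [hq, sub_pow_char_pow, ← hq, h, sub_self]
    exact sub_eq_zero.mp (pow_eq_zero_iff hq0 |>.mp h2)
  -- γ facts
  have hγ0 : γ ≠ 0 := by
    intro h
    have h1 := pow_orderOf_eq_one γ
    rw [hγ, h, zero_pow (by omega : q ^ t - 1 ≠ 0)] at h1
    exact zero_ne_one h1
  have hγpow : γ ^ (q ^ t - 1) = 1 := by rw [← hγ]; exact pow_orderOf_eq_one γ
  have hgen : ∀ x : K, x ≠ 0 → ∃ k : ℕ, x = γ ^ k := fun x hx =>
    FXProof.exists_pow_eq (by rw [hγ, hK]) hx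
  have hγcardpow : γ ^ q ^ t = γ := by
    rw [← hK]; exact FiniteField.pow_card γ
  -- the geometric sum E
  set E : ℕ := ∑ i ∈ Finset.range t, q ^ i with hE_def
  have hEmul : (q - 1) * E = q ^ t - 1 := by
    have h1 : (∑ i ∈ Finset.range t, (q : ℤ) ^ i) * ((q : ℤ) - 1) = (q : ℤ) ^ t - 1 :=
      geom_sum_mul (q : ℤ) t
    have h2 : ((q - 1 : ℕ) : ℤ) = (q : ℤ) - 1 := by
      push_cast [Nat.cast_sub (by omega : 1 ≤ q)]; ring
    have h3 : ((q ^ t - 1 : ℕ) : ℤ) = (q : ℤ) ^ t - 1 := by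
      push_cast [Nat.cast_sub (by omega : 1 ≤ q ^ t)]; ring
    have h4 : ((E : ℕ) : ℤ) = ∑ i ∈ Finset.range t, (q : ℤ) ^ i := by
      rw [hE_def]; push_cast; rfl
    apply Nat.cast_injective (R := ℤ)
    rw [Nat.cast_mul, h2, h3, h4, mul_comm]
    exact h1
  have hE0 : 0 < E := by
    rcases Nat.eq_zero_or_pos E with h | h
    · rw [h, mul_zero] at hEmul; omega
    · exact h
  have hωγ : ω = γ ^ E := by
    rw [hω, ← hEmul, Nat.mul_div_cancel_left E (by omega : 0 < q - 1)]
  have hω0 : ω ≠ 0 := by rw [hωγ]; exact pow_ne_zero _ hγ0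
  have horderω : orderOf ω = q - 1 := by
    have hu : orderOf ω = orderOf γ / Nat.gcd (orderOf γ) E := by
      have h1 : orderOf (Units.mk0 γ hγ0 ^ E) =
          orderOf (Units.mk0 γ hγ0) / Nat.gcd (orderOf (Units.mk0 γ hγ0)) E :=
        orderOf_pow (Units.mk0 γ hγ0)
      have h2 : orderOf (Units.mk0 γ hγ0) = orderOf γ := by rw [← orderOf_units]; rfl
      have h3 : orderOf ω = orderOf (Units.mk0 γ hγ0 ^ E) := by
        rw [← orderOf_units, Units.val_pow_eq_pow_val, hωγ]; rfl
      rw [h3, h1, h2]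
    have hdvd : E ∣ q ^ t - 1 := ⟨q - 1, by rw [mul_comm]; exact hEmul.symm⟩
    rw [hu, hγ, Nat.gcd_eq_right hdvd, ← hEmul, Nat.mul_div_cancel _ hE0]
  have hωpow : ω ^ (q - 1) = 1 := by rw [← horderω]; exact pow_orderOf_eq_one ω
  -- ZMod N facts
  have hqmod : (q : ZMod N) = 1 := by
    have h1 : ((p : ZMod N)) ^ f = 1 := by rw [← hord]; exact pow_orderOf_eq_one _
    rw [hq]
    push_cast
    rw [pow_mul, h1, one_pow]
  have hqtmod : ((q ^ t : ℕ) : ZMod N) = 1 := by rw [Nat.cast_pow, hqmod, one_pow]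
  have hEmod : (E : ZMod N) = (t : ZMod N) := by
    rw [hE_def]
    push_cast [hqmod]
    simp
  have httinv : (t : ZMod N) * (tinv : ZMod N) = 1 := by
    have h := (ZMod.natCast_eq_natCast_iff _ _ _).mpr htinv
    push_cast at h
    exact h
  have hNdvdq1 : N ∣ q - 1 := by
    have h : q ≡ 1 [MOD N] := (ZMod.natCast_eq_natCast_iff q 1 N).mp (by rw [hqmod]; norm_num)
    exact (Nat.modEq_iff_dvd' (by omega)).mp h.symm
  have hNdvdqt1 : N ∣ q ^ t - 1 := by
    have h : q ^ t ≡ 1 [MOD N] :=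
      (ZMod.natCast_eq_natCast_iff (q ^ t) 1 N).mp (by rw [hqtmod]; norm_num)
    exact (Nat.modEq_iff_dvd' (by omega)).mp h.symm
  have hγcong : ∀ k k' : ℕ, γ ^ k = γ ^ k' → (k : ZMod N) = (k' : ZMod N) := by
    intro k k' h
    have h2 := (FXProof.pow_eq_pow_iff' hγ0).mp h
    rw [hγ] at h2
    exact (ZMod.natCast_eq_natCast_iff _ _ _).mpr (h2.of_dvd hNdvdqt1)
  have hωcong : ∀ k k' : ℕ, ω ^ k = ω ^ k' → (k : ZMod N) = (k' : ZMod N) := by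
    intro k k' h
    have h2 := (FXProof.pow_eq_pow_iff' hω0).mp h
    rw [horderω] at h2
    exact (ZMod.natCast_eq_natCast_iff _ _ _).mpr (h2.of_dvd hNdvdq1)
  -- Frobenius stability of Cs-sets for γ
  have hfrobγ : ∀ (J : Finset (ZMod N)) (x : K),
      x ∈ FXProof.Cs N γ J ↔ x ^ q ∈ FXProof.Cs N γ J := by
    intro J x
    constructor
    · rintro ⟨k, rfl, hk⟩
      refine ⟨k * q, by rw [← pow_mul], ?_⟩
      push_cast
      rw [hqmod, mul_one]
      exact hk
    · rintro ⟨j, hj, hjJ⟩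
      have hx0 : x ≠ 0 := by
        intro h
        rw [h, zero_pow hq0] at hj
        exact (pow_ne_zero j hγ0) hj.symm
      obtain ⟨k, rfl⟩ := hgen x hx0
      have h1 : γ ^ (k * q) = γ ^ j := by rw [pow_mul]; exact hj
      have h2 := hγcong _ _ h1
      push_cast at h2
      rw [hqmod, mul_one] at h2
      exact ⟨k, rfl, h2 ▸ hjJ⟩
  -- powers of ω are fixed by x ↦ x^q
  have hωq : ∀ k : ℕ, (ω ^ k) ^ q = ω ^ k := by
    intro k
    rw [← pow_mul]
    apply (FXProof.pow_eq_pow_iff' hω0).mpr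
    rw [horderω]
    have h1 : (q - 1) ∣ k * q - k := ⟨k, by rw [Nat.sub_mul, one_mul, mul_comm q k]⟩
    exact ((Nat.modEq_iff_dvd' (Nat.le_mul_of_pos_right k (by omega))).mpr h1).symm
  -- nonzero elements of the subfield are powers of ω
  have hsubfield : ∀ y : K, y ≠ 0 → y ^ q = y → ∃ k : ℕ, y = ω ^ k := by
    intro y hy0 hyq
    obtain ⟨k0, rfl⟩ := hgen y hy0
    have h1 : γ ^ (k0 * q) = γ ^ k0 := by rw [pow_mul]; exact hyq
    have h2 : k0 * q ≡ k0 [MOD q ^ t - 1] := by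
      rw [← hγ]; exact (FXProof.pow_eq_pow_iff' hγ0).mp h1
    have h3 : (q ^ t - 1) ∣ k0 * q - k0 :=
      (Nat.modEq_iff_dvd' (Nat.le_mul_of_pos_right k0 (by omega))).mp h2.symm
    have h4 : k0 * q - k0 = k0 * (q - 1) := by rw [Nat.mul_sub, mul_one]
    have h5 : E ∣ k0 := by
      have h6 : E * (q - 1) ∣ k0 * (q - 1) := by
        rw [mul_comm E, hEmul, ← h4]
        exact h3
      exact (Nat.mul_dvd_mul_iff_right (by omega : 0 < q - 1)).mp h6
    obtain ⟨k, rfl⟩ := h5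
    exact ⟨k, by rw [hωγ, ← pow_mul]⟩
  -- THE KEY CONGRUENCE
  have key : ∀ (I : Finset ℕ) (ℓ : ℕ),
      tripleInt (γ ^ ℓ) a {x : K | ∃ i ∈ I, ∃ j : ℕ, x = γ ^ (i + N * j)} ≡
        tripleInt (ω ^ (tinv * ℓ)) a {x : K | ∃ i ∈ I, ∃ j : ℕ, x = ω ^ (tinv * i + N * j)}
        [MOD t] := by
    intro I ℓ
    set J : Finset (ZMod N) := I.image (fun i : ℕ => (i : ZMod N)) with hJ_def
    set Jt : Finset (ZMod N) := I.image (fun i : ℕ => ((tinv * i : ℕ) : ZMod N)) with hJt_def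
    have hD'eq : {x : K | ∃ i ∈ I, ∃ j : ℕ, x = γ ^ (i + N * j)} = FXProof.Cs N γ J := by
      have h := FXProof.Cs_eq hN0 hγ0 (by omega : 0 < q ^ t - 1) hγpow hNdvdqt1 1 I
      simpa [one_mul] using h
    have hDteq : {x : K | ∃ i ∈ I, ∃ j : ℕ, x = ω ^ (tinv * i + N * j)}
        = FXProof.Cs N ω Jt :=
      FXProof.Cs_eq hN0 hω0 (by omega : 0 < q - 1) hωpow hNdvdq1 tinv I
    rw [hD'eq, hDteq]
    set β : K := γ ^ ℓ with hβ_def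
    set β' : K := ω ^ (tinv * ℓ) with hβ'_def
    have hβ0 : β ≠ 0 := pow_ne_zero _ hγ0
    have hβ'0 : β' ≠ 0 := pow_ne_zero _ hω0
    set d : ℕ := ℓ * (q ^ t - q) with hd_def
    set δ : K := γ ^ d with hδ_def
    have hδ0 : δ ≠ 0 := pow_ne_zero _ hγ0
    have hqle : q ≤ q ^ t := Nat.le_self_pow (by omega) q
    have hdmod : (d : ZMod N) = 0 := by
      have h1 : ((q ^ t - q : ℕ) : ZMod N) = 0 := by
        rw [Nat.cast_sub hqle, hqtmod, hqmod, sub_self]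
      rw [hd_def, Nat.cast_mul, h1, mul_zero]
    have hδβ : δ * β ^ q = β := by
      rw [hδ_def, hβ_def, ← pow_mul, ← pow_add]
      have h1 : d + ℓ * q = ℓ * q ^ t := by
        rw [hd_def, Nat.mul_sub]
        have : ℓ * q ≤ ℓ * q ^ t := Nat.mul_le_mul_left ℓ hqle
        omega
      rw [h1, mul_comm ℓ (q ^ t), pow_mul, hγcardpow]
    set τ : K → K := fun x => δ * x ^ q with hτ_def
    have hscaleδ : ∀ x : K, x ∈ FXProof.Cs N γ J ↔ δ * x ∈ FXProof.Cs N γ J :=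
      FXProof.scale_Cs hγ0 (by omega : 0 < q ^ t - 1) hγpow J d hdmod
    set S : Set K := {x : K | x ∈ FXProof.Cs N γ J ∧ x + β ∈ FXProof.Cs N γ J ∧
      x + a * β ∈ FXProof.Cs N γ J} with hS_def
    have hτS : Set.MapsTo τ S S := by
      rintro x ⟨h1, h2, h3⟩
      refine ⟨(hscaleδ _).mp ((hfrobγ J x).mp h1), ?_, ?_⟩
      · have he : τ x + β = δ * (x + β) ^ q := by
          rw [hτ_def]
          show δ * x ^ q + β = δ * (x + β) ^ q
          rw [hfrob x β, mul_add, hδβ]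
        rw [he]
        exact (hscaleδ _).mp ((hfrobγ J _).mp h2)
      · have he : τ x + a * β = δ * (x + a * β) ^ q := by
          rw [hτ_def]
          show δ * x ^ q + a * β = δ * (x + a * β) ^ q
          rw [hfrob x (a * β), mul_add, mul_pow, haq]
          congr 1
          rw [show δ * (a * β ^ q) = a * (δ * β ^ q) by ring, hδβ]
        rw [he]
        exact (hscaleδ _).mp ((hfrobγ J _).mp h3)
    have hτinj : Function.Injective τ := by
      intro x y h
      have h1 : δ * x ^ q = δ * y ^ q := h
      exact hfrobinj x y (mul_left_cancel₀ hδ0 h1)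
    have hiter : ∀ (n : ℕ) (x : K),
        τ^[n] x = δ ^ (∑ i ∈ Finset.range n, q ^ i) * x ^ q ^ n := by
      intro n
      induction n with
      | zero => intro x; simp
      | succ n ih =>
        intro x
        rw [Function.iterate_succ_apply', ih x]
        show δ * (δ ^ (∑ i ∈ Finset.range n, q ^ i) * x ^ q ^ n) ^ q = _
        have hsum : ∑ i ∈ Finset.range (n + 1), q ^ i
            = 1 + (∑ i ∈ Finset.range n, q ^ i) * q := by
          rw [Finset.sum_range_succ']
          simp [pow_succ, ← Finset.sum_mul]
          ring
        rw [hsum, pow_add, pow_one, mul_pow, ← pow_mul, ← pow_mul, mul_assoc, pow_succ]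
        ring
    have hper : ∀ x : K, τ^[t] x = x := by
      intro x
      rw [hiter t x]
      have hδE : δ ^ E = 1 := by
        rw [hδ_def, ← pow_mul]
        apply orderOf_dvd_iff_pow_eq_one.mp
        rw [hγ]
        obtain ⟨cc, hcc⟩ : (q - 1) ∣ q ^ (t - 1) - 1 := by
          have := Nat.sub_dvd_pow_sub_pow q 1 (t - 1)
          rwa [one_pow] at this
        have h1 : q ^ t = q * q ^ (t - 1) := by
          conv_lhs => rw [show t = 1 + (t - 1) by omega]
          rw [pow_add, pow_one]
        have h2 : q ^ t - q = q * (q ^ (t - 1) - 1) := by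
          rw [Nat.mul_sub, mul_one, ← h1]
        refine ⟨ℓ * q * cc, ?_⟩
        rw [hd_def, h2, hcc, ← hEmul]
        ring
      rw [← hE_def, hδE, one_mul, show q ^ t = Fintype.card K from hK.symm,
        FiniteField.pow_card]
    have hβ'q : β' ^ q = β' := hωq _
    -- membership transfer lemma
    have hMEM : ∀ y : K, y ^ q = y →
        (β * y ∈ FXProof.Cs N γ J ↔ β' * y ∈ FXProof.Cs N ω Jt) := by
      intro y hyq
      rcases eq_or_ne y 0 with rfl | hy0
      · rw [mul_zero, mul_zero]
        exact iff_of_false (FXProof.zero_not_mem_Cs hγ0 J) (FXProof.zero_not_mem_Cs hω0 Jt)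
      · obtain ⟨k, rfl⟩ := hsubfield y hy0 hyq
        have hβy : β * ω ^ k = γ ^ (ℓ + E * k) := by
          rw [hβ_def, hωγ, ← pow_mul, ← pow_add]
        have hβ'y : β' * ω ^ k = ω ^ (tinv * ℓ + k) := by rw [hβ'_def, ← pow_add]
        rw [hβy, hβ'y, FXProof.mem_Cs_iff hγ0 hγcong J _, FXProof.mem_Cs_iff hω0 hωcong Jt _]
        constructor
        · intro h
          obtain ⟨i, hiI, hi⟩ := Finset.mem_image.mp h
          apply Finset.mem_image.mpr
          refine ⟨i, hiI, ?_⟩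
          push_cast at hi ⊢
          rw [hEmod] at hi
          calc (tinv : ZMod N) * i = tinv * (ℓ + t * k) := by rw [hi]
          _ = tinv * ℓ + (t * tinv) * k := by ring
          _ = tinv * ℓ + k := by rw [httinv, one_mul]
        · intro h
          obtain ⟨i, hiI, hi⟩ := Finset.mem_image.mp h
          apply Finset.mem_image.mpr
          refine ⟨i, hiI, ?_⟩
          push_cast at hi ⊢
          rw [hEmod]
          calc (i : ZMod N) = (t * tinv) * i := by rw [httinv, one_mul]
          _ = t * ((tinv : ZMod N) * i) := by ring
          _ = t * ((tinv : ZMod N) * ℓ + k) := by rw [hi]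
          _ = (t * tinv) * ℓ + t * k := by ring
          _ = ℓ + t * k := by rw [httinv, one_mul]
    -- identification of the fixed-point set
    have hfixiff : ∀ x : K, (x ∈ S ∧ τ x = x) ↔
        (β' * β⁻¹ * x ∈ FXProof.Cs N ω Jt ∧ β' * β⁻¹ * x + β' ∈ FXProof.Cs N ω Jt ∧
          β' * β⁻¹ * x + a * β' ∈ FXProof.Cs N ω Jt) := by
      intro x
      have hx : x = β * (β⁻¹ * x) := by field_simp
      have e1 : β' * β⁻¹ * x = β' * (β⁻¹ * x) := by ring
      have ea : β * (β⁻¹ * x + a) = x + a * β := by field_simp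
      have e1' : β * (β⁻¹ * x + 1) = x + β := by field_simp
      have eb : β' * (β⁻¹ * x + 1) = β' * β⁻¹ * x + β' := by ring
      have ec : β' * (β⁻¹ * x + a) = β' * β⁻¹ * x + a * β' := by ring
      constructor
      · rintro ⟨⟨h1, h2, h3⟩, hτx⟩
        have hyq : (β⁻¹ * x) ^ q = β⁻¹ * x := by
          have hh : δ * (β * (β⁻¹ * x)) ^ q = β * (β⁻¹ * x) := by rw [← hx]; exact hτx
          rw [mul_pow, ← mul_assoc, hδβ] at hh
          exact mul_left_cancel₀ hβ0 hh
        have hy1 : (β⁻¹ * x + 1) ^ q = β⁻¹ * x + 1 := by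
          rw [hfrob, hyq, one_pow]
        have hya : (β⁻¹ * x + a) ^ q = β⁻¹ * x + a := by
          rw [hfrob, hyq, haq]
        refine ⟨?_, ?_, ?_⟩
        · rw [e1]
          exact (hMEM _ hyq).mp (by rw [← hx]; exact h1)
        · rw [← eb]
          exact (hMEM _ hy1).mp (by rw [e1']; exact h2)
        · rw [← ec]
          exact (hMEM _ hya).mp (by rw [ea]; exact h3)
      · rintro ⟨h1, h2, h3⟩
        rw [e1] at h1
        rw [← eb] at h2
        rw [← ec] at h3
        rw [eb] at h2
        rw [ec] at h3
        rw [← eb] at h2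
        rw [← ec] at h3
        have hzq : (β' * (β⁻¹ * x)) ^ q = β' * (β⁻¹ * x) := by
          obtain ⟨k, hk, -⟩ := h1
          rw [hk]
          exact hωq k
        have hyq : (β⁻¹ * x) ^ q = β⁻¹ * x := by
          have hh : β' * (β⁻¹ * x) ^ q = β' * (β⁻¹ * x) := by
            rw [← hβ'q]
            calc β' ^ q * (β⁻¹ * x) ^ q = (β' * (β⁻¹ * x)) ^ q := by rw [← mul_pow]
            _ = β' * (β⁻¹ * x) := hzq
            _ = β' ^ q * (β⁻¹ * x) := by rw [hβ'q]
          exact mul_left_cancel₀ hβ'0 hh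
        have hy1 : (β⁻¹ * x + 1) ^ q = β⁻¹ * x + 1 := by rw [hfrob, hyq, one_pow]
        have hya : (β⁻¹ * x + a) ^ q = β⁻¹ * x + a := by rw [hfrob, hyq, haq]
        refine ⟨⟨?_, ?_, ?_⟩, ?_⟩
        · rw [hx]
          exact (hMEM _ hyq).mpr h1
        · rw [← e1']
          exact (hMEM _ hy1).mpr h2
        · rw [← ea]
          exact (hMEM _ hya).mpr h3
        · rw [hx]
          show δ * (β * (β⁻¹ * x)) ^ q = β * (β⁻¹ * x)
          rw [mul_pow, ← mul_assoc, hδβ, hyq]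
    set Tset : Set K := {z : K | z ∈ FXProof.Cs N ω Jt ∧ z + β' ∈ FXProof.Cs N ω Jt ∧
      z + a * β' ∈ FXProof.Cs N ω Jt} with hTset_def
    have himg : {x : K | x ∈ S ∧ τ x = x} = (fun z => (β * β'⁻¹) * z) '' Tset := by
      ext x
      rw [Set.mem_image]
      constructor
      · intro hx
        refine ⟨β' * β⁻¹ * x, (hfixiff x).mp hx, by field_simp⟩
      · rintro ⟨z, hz, rfl⟩
        apply (hfixiff _).mpr
        have hzz : β' * β⁻¹ * (β * β'⁻¹ * z) = z := by field_simp
        rw [hzz]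
        exact hz
    have hcount := FXProof.ncard_modEq_fixed t ht S τ hτS hτinj hper
    rw [himg, Set.ncard_image_of_injective _
      (mul_right_injective₀ (by
        apply mul_ne_zero hβ0
        exact inv_ne_zero hβ'0))] at hcount
    exact hcount
  -- scaling-invariance setups
  have hscaleγN : ∀ J : Finset (ZMod N), ∀ x : K,
      x ∈ FXProof.Cs N γ J ↔ γ ^ N * x ∈ FXProof.Cs N γ J := fun J =>
    FXProof.scale_Cs hγ0 (by omega : 0 < q ^ t - 1) hγpow J N (ZMod.natCast_self N)
  have hscaleωN : ∀ J : Finset (ZMod N), ∀ x : K,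
      x ∈ FXProof.Cs N ω J ↔ ω ^ N * x ∈ FXProof.Cs N ω J := fun J =>
    FXProof.scale_Cs hω0 (by omega : 0 < q - 1) hωpow J N (ZMod.natCast_self N)
  -- main image equality (between γ-side and ω-side)
  have mainEq : ∀ I : Finset ℕ,
      (Finset.range N).image (fun ℓ =>
        ((tripleInt (γ ^ ℓ) a {x : K | ∃ i ∈ I, ∃ j : ℕ, x = γ ^ (i + N * j)} : ℕ) : ZMod t))
      = (Finset.range N).image (fun ℓ =>
        ((tripleInt (ω ^ ℓ) a
          {x : K | ∃ i ∈ I, ∃ j : ℕ, x = ω ^ (tinv * i + N * j)} : ℕ) : ZMod t)) := by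
    intro I
    set J : Finset (ZMod N) := I.image (fun i : ℕ => (i : ZMod N)) with hJ_def
    set Jt : Finset (ZMod N) := I.image (fun i : ℕ => ((tinv * i : ℕ) : ZMod N)) with hJt_def
    have hD'eq : {x : K | ∃ i ∈ I, ∃ j : ℕ, x = γ ^ (i + N * j)} = FXProof.Cs N γ J := by
      have h := FXProof.Cs_eq hN0 hγ0 (by omega : 0 < q ^ t - 1) hγpow hNdvdqt1 1 I
      simpa [one_mul] using h
    have hDteq : {x : K | ∃ i ∈ I, ∃ j : ℕ, x = ω ^ (tinv * i + N * j)}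
        = FXProof.Cs N ω Jt :=
      FXProof.Cs_eq hN0 hω0 (by omega : 0 < q - 1) hωpow hNdvdq1 tinv I
    apply Finset.Subset.antisymm
    · rw [Finset.image_subset_iff]
      intro ℓ hℓ
      apply Finset.mem_image.mpr
      refine ⟨(tinv * ℓ) % N, Finset.mem_range.mpr (Nat.mod_lt _ hN0), ?_⟩
      have h2 : tripleInt (ω ^ ((tinv * ℓ) % N)) a
          {x : K | ∃ i ∈ I, ∃ j : ℕ, x = ω ^ (tinv * i + N * j)}
          = tripleInt (ω ^ (tinv * ℓ)) a
            {x : K | ∃ i ∈ I, ∃ j : ℕ, x = ω ^ (tinv * i + N * j)} := by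
        rw [hDteq]
        exact FXProof.tripleInt_pow_congr ω hω0 N a _ (hscaleωN Jt) _ _
          (by rw [ZMod.natCast_mod])
      rw [h2]
      exact ((ZMod.natCast_eq_natCast_iff _ _ _).mpr (key I ℓ)).symm
    · rw [Finset.image_subset_iff]
      intro ℓ' hℓ'
      apply Finset.mem_image.mpr
      refine ⟨(t * ℓ') % N, Finset.mem_range.mpr (Nat.mod_lt _ hN0), ?_⟩
      have h1 := key I ((t * ℓ') % N)
      have h2 : tripleInt (ω ^ (tinv * ((t * ℓ') % N))) a
          {x : K | ∃ i ∈ I, ∃ j : ℕ, x = ω ^ (tinv * i + N * j)}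
          = tripleInt (ω ^ ℓ') a
            {x : K | ∃ i ∈ I, ∃ j : ℕ, x = ω ^ (tinv * i + N * j)} := by
        rw [hDteq]
        apply FXProof.tripleInt_pow_congr ω hω0 N a _ (hscaleωN Jt)
        push_cast [ZMod.natCast_mod]
        calc (tinv : ZMod N) * ((t : ZMod N) * ℓ') = ((t : ZMod N) * tinv) * ℓ' := by ring
        _ = (ℓ' : ZMod N) := by rw [httinv, one_mul]
      rw [h2] at h1
      exact (ZMod.natCast_eq_natCast_iff _ _ _).mpr h1
  -- Part 1
  have part1 : (Finset.range N).image (fun ℓ => ((tripleInt (γ ^ ℓ) a D1' : ℕ) : ZMod t)) ≠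
      (Finset.range N).image (fun ℓ => ((tripleInt (γ ^ ℓ) a D2' : ℕ) : ZMod t)) := by
    rw [hD1', hD2', mainEq I1, mainEq I2, ← hD1t, ← hD2t]
    exact hne
  refine ⟨part1, ?_⟩
  rintro ⟨σ, x₀, hσ⟩
  apply part1
  -- a lies in the prime field
  obtain ⟨na, hna⟩ : ∃ n : ℕ, a = (n : K) := by
    set χ : ZMod p →+* K := ZMod.castHom (dvd_refl p) K with hχ_def
    set P : Polynomial K := Polynomial.X ^ p - Polynomial.X with hP_def
    have hP0 : P ≠ 0 := FiniteField.X_pow_card_sub_X_ne_zero K hp.one_lt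
    have hroots : ∀ z : ZMod p, χ z ∈ P.roots.toFinset := by
      intro z
      rw [Multiset.mem_toFinset, Polynomial.mem_roots hP0]
      simp only [hP_def, Polynomial.IsRoot, Polynomial.eval_sub, Polynomial.eval_pow,
        Polynomial.eval_X]
      rw [← map_pow, ZMod.pow_card, sub_self]
    have haroot : a ∈ P.roots.toFinset := by
      rw [Multiset.mem_toFinset, Polynomial.mem_roots hP0]
      simp only [hP_def, Polynomial.IsRoot, Polynomial.eval_sub, Polynomial.eval_pow,
        Polynomial.eval_X]
      rw [hap, sub_self]
    have hcardroots : P.roots.toFinset.card ≤ p := by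
      calc P.roots.toFinset.card ≤ Multiset.card P.roots := Multiset.toFinset_card_le _
      _ ≤ P.natDegree := Polynomial.card_roots' P
      _ = p := FiniteField.X_pow_card_sub_X_natDegree_eq K hp.one_lt
    set S0 : Finset K := Finset.univ.image (fun z : ZMod p => χ z) with hS0_def
    have hS0card : S0.card = p := by
      rw [hS0_def, Finset.card_image_of_injective _ (χ.injective), Finset.card_univ,
        ZMod.card]
    have hS0sub : S0 ⊆ P.roots.toFinset := by
      intro x hx
      obtain ⟨z, -, rfl⟩ := Finset.mem_image.mp hx
      exact hroots z
    have haS0 : a ∈ S0 := by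
      by_contra hnot
      have h1 : insert a S0 ⊆ P.roots.toFinset := by
        intro x hx
        rcases Finset.mem_insert.mp hx with rfl | hx
        · exact haroot
        · exact hS0sub hx
      have h2 : (insert a S0).card = p + 1 := by
        rw [Finset.card_insert_of_notMem hnot, hS0card]
      have h3 := Finset.card_le_card h1
      omega
    obtain ⟨z, -, hz⟩ := Finset.mem_image.mp haS0
    refine ⟨z.val, ?_⟩
    rw [← hz, ← map_natCast χ z.val, ZMod.natCast_val, ZMod.cast_id]
  have hcomm : ∀ (σ' : K ≃+ K) (w : K), σ' (a * w) = a * σ' w := by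
    intro σ' w
    rw [hna, ← nsmul_eq_mul, map_nsmul, nsmul_eq_mul]
  have hmemσ : ∀ y : K, σ y + x₀ ∈ D2' ↔ y ∈ D1' := by
    intro y
    constructor
    · intro h
      rw [← hσ] at h
      obtain ⟨y', hy', heq⟩ := h
      have : y' = y := σ.injective (by simpa using heq)
      rwa [← this]
    · intro h
      rw [← hσ]
      exact ⟨y, h, rfl⟩
  have hTtrans : ∀ β : K, tripleInt β a D2' = tripleInt (σ.symm β) a D1' := by
    intro β
    unfold tripleInt
    have himg : {z : K | z ∈ D2' ∧ z + β ∈ D2' ∧ z + a * β ∈ D2'} =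
        (fun y => σ y + x₀) '' {x : K | x ∈ D1' ∧ x + σ.symm β ∈ D1' ∧
          x + a * σ.symm β ∈ D1'} := by
      ext z
      rw [Set.mem_image]
      constructor
      · rintro ⟨h1, h2, h3⟩
        refine ⟨σ.symm (z - x₀), ⟨?_, ?_, ?_⟩, by simp⟩
        · apply (hmemσ _).mp
          simpa using h1
        · apply (hmemσ _).mp
          have he : σ (σ.symm (z - x₀) + σ.symm β) + x₀ = z + β := by
            rw [map_add, σ.apply_symm_apply, σ.apply_symm_apply]
            ring
          rw [he]
          exact h2
        · apply (hmemσ _).mp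
          have he : σ (σ.symm (z - x₀) + a * σ.symm β) + x₀ = z + a * β := by
            rw [map_add, hcomm σ, σ.apply_symm_apply, σ.apply_symm_apply]
            ring
          rw [he]
          exact h3
      · rintro ⟨x, ⟨h1, h2, h3⟩, rfl⟩
        refine ⟨(hmemσ x).mpr h1, ?_, ?_⟩
        · have he : σ x + x₀ + β = σ (x + σ.symm β) + x₀ := by
            rw [map_add, σ.apply_symm_apply]
            ring
          rw [he]
          exact (hmemσ _).mpr h2
        · have he : σ x + x₀ + a * β = σ (x + a * σ.symm β) + x₀ := by
            rw [map_add, hcomm σ, σ.apply_symm_apply]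
            ring
          rw [he]
          exact (hmemσ _).mpr h3
    rw [himg, Set.ncard_image_of_injective _
      (fun y y' h => σ.injective (by simpa using h))]
  -- invariance of γ-side tripleInt under exponent congruence
  set J1 : Finset (ZMod N) := I1.image (fun i : ℕ => (i : ZMod N)) with hJ1_def
  set J2 : Finset (ZMod N) := I2.image (fun i : ℕ => (i : ZMod N)) with hJ2_def
  have hD1'C : D1' = FXProof.Cs N γ J1 := by
    rw [hD1']
    have h := FXProof.Cs_eq hN0 hγ0 (by omega : 0 < q ^ t - 1) hγpow hNdvdqt1 1 I1
    simpa [one_mul] using h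
  have hD2'C : D2' = FXProof.Cs N γ J2 := by
    rw [hD2']
    have h := FXProof.Cs_eq hN0 hγ0 (by omega : 0 < q ^ t - 1) hγpow hNdvdqt1 1 I2
    simpa [one_mul] using h
  have hinv1 : ∀ k k' : ℕ, (k : ZMod N) = (k' : ZMod N) →
      tripleInt (γ ^ k) a D1' = tripleInt (γ ^ k') a D1' := by
    intro k k' h
    rw [hD1'C]
    exact FXProof.tripleInt_pow_congr γ hγ0 N a _ (hscaleγN J1) _ _ h
  have hinv2 : ∀ k k' : ℕ, (k : ZMod N) = (k' : ZMod N) →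
      tripleInt (γ ^ k) a D2' = tripleInt (γ ^ k') a D2' := by
    intro k k' h
    rw [hD2'C]
    exact FXProof.tripleInt_pow_congr γ hγ0 N a _ (hscaleγN J2) _ _ h
  -- now: the two γ-side images coincide
  apply Finset.Subset.antisymm
  · rw [Finset.image_subset_iff]
    intro ℓ hℓ
    have h0 : σ (γ ^ ℓ) ≠ 0 := by
      intro h
      have : γ ^ ℓ = (0 : K) := σ.injective (by rw [h, map_zero])
      exact pow_ne_zero ℓ hγ0 this
    obtain ⟨k, hk⟩ := hgen _ h0
    apply Finset.mem_image.mpr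
    refine ⟨k % N, Finset.mem_range.mpr (Nat.mod_lt _ hN0), ?_⟩
    congr 1
    have e1 : tripleInt (γ ^ (k % N)) a D2' = tripleInt (γ ^ k) a D2' :=
      hinv2 _ _ (by rw [ZMod.natCast_mod])
    rw [e1, ← hk, hTtrans, σ.symm_apply_apply]
  · rw [Finset.image_subset_iff]
    intro ℓ hℓ
    have h0 : σ.symm (γ ^ ℓ) ≠ 0 := by
      intro h
      have : γ ^ ℓ = (0 : K) := σ.symm.injective (by rw [h, map_zero])
      exact pow_ne_zero ℓ hγ0 this
    obtain ⟨k, hk⟩ := hgen _ h0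
    apply Finset.mem_image.mpr
    refine ⟨k % N, Finset.mem_range.mpr (Nat.mod_lt _ hN0), ?_⟩
    congr 1
    have e1 : tripleInt (γ ^ (k % N)) a D1' = tripleInt (γ ^ k) a D1' :=
      hinv1 _ _ (by rw [ZMod.natCast_mod])
    rw [e1, ← hk, ← hTtrans]
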